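/- For the linear loss, there exists a sub-multiset T' ⊆ T with y_test·⟨w*(T'), x_test⟩ ≥ 0 if and only if y_test·⟨w*(T*), x_test⟩ ≥ 0, where T* := {(x,y) ∈ T : y_test·α·y·⟨η⊗x, x_test⟩ > 0} is the sub-multiset of 'good' samples. (This is the correctness of the greedy Good Training-sample Assessment algorithm for linear loss.) -/
import Mathlib


open Classical

/-- One SGD update for the linear loss `L(s) = -α (s + β)` with learning-rate vector `η`:
`w ↦ w + α y (η ⊗ x)`. -/
noncomputable def linStep (d : ℕ) (α : ℝ) (η : Fin d → ℝ)
    (w : Fin d → ℝ) (p : (Fin d → ℝ) × ℝ) : Fin d → ℝ :=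
  fun i => w i + α * p.2 * (η i * p.1 i)

/-- `w*(T') = w⁰ + Σ_{(x,y) ∈ T'} α y (η ⊗ x)`. -/
noncomputable def wStar (d : ℕ) (α : ℝ) (η w0 : Fin d → ℝ)
    (T : Multiset ((Fin d → ℝ) × ℝ)) : Fin d → ℝ :=
  fun i => w0 i + (T.map (fun p => α * p.2 * (η i * p.1 i))).sum

/-- Dot product on `ℝ^d`. -/
noncomputable def dotP (d : ℕ) (a b : Fin d → ℝ) : ℝ := ∑ i, a i * b i

noncomputable def gval (d : ℕ) (α : ℝ) (η xtest : Fin d → ℝ) (ytest : ℝ)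
    (p : (Fin d → ℝ) × ℝ) : ℝ :=
  ytest * (α * p.2) * dotP d (fun i => η i * p.1 i) xtest

lemma key (d : ℕ) (α : ℝ) (η w0 xtest : Fin d → ℝ) (ytest : ℝ)
    (S : Multiset ((Fin d → ℝ) × ℝ)) :
    ytest * dotP d (wStar d α η w0 S) xtest
      = ytest * dotP d w0 xtest + (S.map (gval d α η xtest ytest)).sum := by
  induction S using Multiset.induction with
  | empty => simp [wStar, dotP]
  | cons a s ih =>
    have hw : ∀ i, wStar d α η w0 (a ::ₘ s) i
        = wStar d α η w0 s i + α * a.2 * (η i * a.1 i) := by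
      intro i; simp [wStar]; ring
    have hdot : dotP d (wStar d α η w0 (a ::ₘ s)) xtest
        = dotP d (wStar d α η w0 s) xtest
          + (α * a.2) * dotP d (fun i => η i * a.1 i) xtest := by
      simp only [dotP, hw, add_mul, Finset.sum_add_distrib, Finset.mul_sum]
      ring_nf
    rw [hdot]
    simp only [Multiset.map_cons, Multiset.sum_cons]
    rw [mul_add, ih, gval]
    ring

lemma msum_nonpos : ∀ {s : Multiset ℝ}, (∀ x ∈ s, x ≤ 0) → s.sum ≤ 0 := by
  intro s
  induction s using Multiset.induction with
  | empty => simp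
  | cons a t ih =>
    intro h
    simp only [Multiset.sum_cons]
    exact add_nonpos (h a (Multiset.mem_cons_self a t))
      (ih fun x hx => h x (Multiset.mem_cons_of_mem hx))

lemma sum_le_good {X : Type*} (g : X → ℝ) (T' T : Multiset X) (h : T' ≤ T) :
    (T'.map g).sum ≤ ((T.filter (fun p => 0 < g p)).map g).sum := by
  classical
  have hsplit : T'.filter (fun p => 0 < g p) + T'.filter (fun p => ¬ 0 < g p) = T' :=
    Multiset.filter_add_not _ _
  have h1 : (T'.map g).sum
      = ((T'.filter (fun p => 0 < g p)).map g).sum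
        + ((T'.filter (fun p => ¬ 0 < g p)).map g).sum := by
    rw [← Multiset.sum_add, ← Multiset.map_add, hsplit]
  have h2 : ((T'.filter (fun p => ¬ 0 < g p)).map g).sum ≤ 0 := by
    apply msum_nonpos
    intro x hx
    obtain ⟨p, hp, rfl⟩ := Multiset.mem_map.mp hx
    have := (Multiset.mem_filter.mp hp).2
    linarith [not_lt.mp this]
  have hle : T'.filter (fun p => 0 < g p) ≤ T.filter (fun p => 0 < g p) :=
    Multiset.filter_le_filter _ h
  obtain ⟨u, hu⟩ := Multiset.le_iff_exists_add.mp hle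
  have h3 : ((T.filter (fun p => 0 < g p)).map g).sum
      = ((T'.filter (fun p => 0 < g p)).map g).sum + (u.map g).sum := by
    rw [hu, Multiset.map_add, Multiset.sum_add]
  have h4 : 0 ≤ (u.map g).sum := by
    apply Multiset.sum_nonneg
    intro x hx
    obtain ⟨p, hp, rfl⟩ := Multiset.mem_map.mp hx
    have hpT : p ∈ T.filter (fun p => 0 < g p) := by
      rw [hu]; exact Multiset.mem_add.mpr (Or.inr hp)
    exact le_of_lt (Multiset.mem_filter.mp hpT).2
  linarith

theorem stmt1 (d : ℕ) (α β : ℝ) (hα : 0 < α) (η : Fin d → ℝ) (hη : ∀ i, 0 ≤ η i)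
    (w0 xtest : Fin d → ℝ) (ytest : ℝ) (hytest : ytest = 1 ∨ ytest = -1)
    (T : Multiset ((Fin d → ℝ) × ℝ)) (hT : ∀ p ∈ T, p.2 = 1 ∨ p.2 = -1) :
    (∃ T' : Multiset ((Fin d → ℝ) × ℝ), T' ≤ T ∧
        0 ≤ ytest * dotP d (wStar d α η w0 T') xtest) ↔
      0 ≤ ytest * dotP d (wStar d α η w0
        (T.filter (fun p =>
          0 < ytest * (α * p.2) * dotP d (fun i => η i * p.1 i) xtest))) xtest := by
  have hfilt : (T.filter (fun p =>
        0 < ytest * (α * p.2) * dotP d (fun i => η i * p.1 i) xtest))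
      = T.filter (fun p => 0 < gval d α η xtest ytest p) := rfl
  constructor
  · rintro ⟨T', hle, hnn⟩
    rw [hfilt, key] at *
    have := sum_le_good (gval d α η xtest ytest) T' T hle
    linarith
  · intro h
    exact ⟨_, Multiset.filter_le _ _, h⟩
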